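/- arXiv:2001.06835 — 4 statements merged into one kernel-verified Lean document; each statement's English description precedes it below -/
import Mathlib

section
/- Let κ > 0 and let φ, ψ : ℝ⁵ → ℝ be real-valued Schwartz functions, not both identically zero, satisfying the elliptic system φ − Δφ = φψ and 2ψ − κΔψ = φ² on ℝ⁵. Then H_κ(φ,ψ) = 5·M(φ,ψ) and R(φ,ψ) = 4·M(φ,ψ); that is, M(φ,ψ) : H_κ(φ,ψ) : R(φ,ψ) = 1 : 5 : 4. -/
open MeasureTheory

noncomputable section

abbrev E5 := EuclideanSpace ℝ (Fin 5)

/-- Spatial partial derivative of a real-valued `f` at `x` in direction `i`. -/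
def pdR (f : E5 → ℝ) (x : E5) (i : Fin 5) : ℝ :=
  fderiv ℝ f x (EuclideanSpace.single i 1)

/-- Laplacian of a real-valued function on `ℝ⁵`. -/
def lapR (f : E5 → ℝ) (x : E5) : ℝ :=
  ∑ i : Fin 5, fderiv ℝ (fun y => pdR f y i) x (EuclideanSpace.single i 1)

namespace Pohozaev

open SchwartzMap

abbrev S := SchwartzMap E5 ℝ

def V (i : Fin 5) : E5 := EuclideanSpace.single i 1

lemma tg (f : S) : Function.HasTemperateGrowth (⇑f) :=
  ⟨f.smooth', fun n => ⟨0, SchwartzMap.seminorm ℝ 0 n f, fun x => by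
    simpa using SchwartzMap.norm_iteratedFDeriv_le_seminorm ℝ f n x⟩⟩

def mulS (f g : S) : S := bilinLeftCLM (ContinuousLinearMap.mul ℝ ℝ) (tg g) f

@[simp] lemma mulS_apply (f g : S) (x : E5) : mulS f g x = f x * g x := rfl

def DS (i : Fin 5) (f : S) : S := LineDeriv.lineDerivOpCLM ℝ S (V i) f

lemma DS_apply (i : Fin 5) (f : S) (x : E5) : DS i f x = fderiv ℝ (⇑f) x (V i) := rfl

lemma pdR_eq (f : S) (x : E5) (i : Fin 5) : pdR (⇑f) x i = DS i f x := rfl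

def lapS (f : S) : S := ∑ i : Fin 5, DS i (DS i f)

lemma lapS_apply (f : S) (x : E5) : lapS f x = ∑ i : Fin 5, DS i (DS i f) x := by
  have h := map_sum (SchwartzMap.coeHom S E5 ℝ) (fun i => DS i (DS i f)) Finset.univ
  have : ⇑(lapS f) = ∑ i : Fin 5, ⇑(DS i (DS i f)) := h
  rw [show lapS f x = (⇑(lapS f)) x from rfl, this, Finset.sum_apply]

lemma lapR_eq (f : S) (x : E5) : lapR (⇑f) x = lapS f x := by
  rw [lapS_apply]; rfl

lemma DS_mulS (i : Fin 5) (f g : S) (x : E5) :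
    DS i (mulS f g) x = DS i f x * g x + f x * DS i g x := by
  have h : ⇑(mulS f g) = fun y => f y * g y := rfl
  rw [DS_apply, h, fderiv_fun_mul f.differentiableAt g.differentiableAt]
  simp only [ContinuousLinearMap.add_apply, ContinuousLinearMap.coe_smul', Pi.smul_apply,
    smul_eq_mul, DS_apply]
  ring

lemma intg_congr {f g : E5 → ℝ} (h : ∀ x, f x = g x) :
    ∫ x : E5, f x = ∫ x : E5, g x := by
  have : f = g := funext h
  rw [this]

/-! ### second derivative symmetry -/

lemma DS_symm (f : S) (i j : Fin 5) (x : E5) :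
    DS j (DS i f) x = DS i (DS j f) x := by
  have hdiff : Differentiable ℝ (fderiv ℝ (⇑f)) :=
    ((f.smooth 2).fderiv_right (m := 1) (by exact_mod_cast le_rfl)).differentiable one_ne_zero
  have key : ∀ v w : E5, fderiv ℝ (fun y => fderiv ℝ (⇑f) y v) x w
      = fderiv ℝ (fderiv ℝ (⇑f)) x w v := by
    intro v w
    rw [fderiv_clm_apply (hdiff x) (differentiableAt_const v)]
    simp
  have hsymm : ∀ v w : E5, fderiv ℝ (fderiv ℝ (⇑f)) x v w
      = fderiv ℝ (fderiv ℝ (⇑f)) x w v :=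
    (f.smooth 2).contDiffAt.isSymmSndFDerivAt (by simp)
  show fderiv ℝ (⇑(DS i f)) x (V j) = fderiv ℝ (⇑(DS j f)) x (V i)
  have hi : ⇑(DS i f) = fun y => fderiv ℝ (⇑f) y (V i) := rfl
  have hj : ⇑(DS j f) = fun y => fderiv ℝ (⇑f) y (V j) := rfl
  rw [hi, hj, key, key, hsymm]

/-! ### coordinate functions -/

lemma coord_diff (i : Fin 5) : Differentiable ℝ (fun x : E5 => x i) :=
  (EuclideanSpace.proj (𝕜 := ℝ) (i := i)).differentiable

lemma fderiv_coord (i : Fin 5) (x : E5) (v : E5) :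
    fderiv ℝ (fun y : E5 => y i) x v = v i := by
  have h : (fun y : E5 => y i) = ⇑(EuclideanSpace.proj (𝕜 := ℝ) (i := i)) := rfl
  rw [h, ContinuousLinearMap.fderiv]
  rfl

lemma V_apply (i j : Fin 5) : V i j = if j = i then 1 else 0 := by
  simp [V, EuclideanSpace.single_apply]

lemma abs_coord_le (x : E5) (i : Fin 5) : |x i| ≤ ‖x‖ := by
  have h1 : (inner ℝ (EuclideanSpace.single i (1:ℝ) : E5) x : ℝ) = x i := by
    simp [EuclideanSpace.inner_single_left]
  calc |x i| = ‖(inner ℝ (EuclideanSpace.single i (1:ℝ) : E5) x : ℝ)‖ := by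
        rw [h1, Real.norm_eq_abs]
    _ ≤ ‖(EuclideanSpace.single i (1:ℝ) : E5)‖ * ‖x‖ := norm_inner_le_norm _ _
    _ = ‖x‖ := by rw [EuclideanSpace.norm_single]; simp

/-! ### integrability -/

lemma integrable_mulS (f g : S) : Integrable (fun x : E5 => f x * g x) volume :=
  (mulS f g).integrable

lemma integrable_coord_mul (i : Fin 5) (f : S) :
    Integrable (fun x : E5 => x i * f x) volume := by
  refine (f.integrable_pow_mul volume 1).mono' ?_ ?_
  · exact ((EuclideanSpace.proj (𝕜 := ℝ) (i := i)).continuous.mul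
      f.continuous).aestronglyMeasurable
  · filter_upwards with x
    rw [norm_mul, pow_one, Real.norm_eq_abs (x i)]
    exact mul_le_mul_of_nonneg_right (abs_coord_le x i) (norm_nonneg _)

lemma integrable_coord_mul2 (i : Fin 5) (u g : S) :
    Integrable (fun x : E5 => (x i * u x) * g x) volume :=
  (integrable_coord_mul i (mulS u g)).congr
    (Filter.Eventually.of_forall fun x => by simp [mul_assoc])

/-! ### integration by parts -/

lemma ibp (f g : S) (i : Fin 5) :
    ∫ x : E5, f x * DS i g x = - ∫ x : E5, DS i f x * g x :=
  integral_mul_fderiv_eq_neg_fderiv_mul_of_integrable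
    (integrable_mulS (DS i f) g) (integrable_mulS f (DS i g)) (integrable_mulS f g)
    (fun x _ => f.differentiableAt) (fun x _ => g.differentiableAt)

lemma ibp_coord (i : Fin 5) (h : S) :
    ∫ x : E5, x i * DS i h x = - ∫ x : E5, h x := by
  have hfd : ∀ x : E5, fderiv ℝ (fun y : E5 => y i) x (V i) = 1 := by
    intro x; rw [fderiv_coord, V_apply, if_pos rfl]
  have hint1 : Integrable (fun x : E5 => fderiv ℝ (fun y : E5 => y i) x (V i) * h x) volume := by
    simp only [hfd, one_mul]
    exact h.integrable
  have key := integral_mul_fderiv_eq_neg_fderiv_mul_of_integrable (μ := volume)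
    (f := fun y : E5 => y i) (g := ⇑h) (v := V i)
    hint1 (integrable_coord_mul i (DS i h)) (integrable_coord_mul i h)
    (fun x _ => coord_diff i x) (fun x _ => h.differentiableAt)
  rw [show (∫ x : E5, x i * DS i h x) = ∫ x : E5, (fun y : E5 => y i) x * fderiv ℝ (⇑h) x (V i)
      from rfl, key]
  congr 1
  exact intg_congr fun x => by rw [hfd, one_mul]

lemma ibp_coord_mul (i j : Fin 5) (u g : S) :
    ∫ x : E5, (x i * u x) * DS j g x
      = - ∫ x : E5, (V j i * u x + x i * DS j u x) * g x := by
  have hdf : Differentiable ℝ (fun x : E5 => x i * u x) :=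
    (coord_diff i).mul u.differentiable
  have hfd : ∀ x : E5, fderiv ℝ (fun y : E5 => y i * u y) x (V j)
      = V j i * u x + x i * DS j u x := by
    intro x
    rw [fderiv_fun_mul ((coord_diff i) x) u.differentiableAt]
    simp only [ContinuousLinearMap.add_apply, ContinuousLinearMap.coe_smul', Pi.smul_apply,
      smul_eq_mul, fderiv_coord, DS_apply]
    ring
  have h1 : Integrable (fun x : E5 => fderiv ℝ (fun y : E5 => y i * u y) x (V j) * g x) volume := by
    simp only [hfd]
    have hA : Integrable (fun x : E5 => V j i * (u x * g x)) volume :=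
      (integrable_mulS u g).const_mul _
    have hB : Integrable (fun x : E5 => (x i * DS j u x) * g x) volume :=
      integrable_coord_mul2 i (DS j u) g
    exact (hA.add hB).congr (Filter.Eventually.of_forall fun x => by simp only [Pi.add_apply]; ring)
  have h2 : Integrable (fun x : E5 => (x i * u x) * fderiv ℝ (⇑g) x (V j)) volume :=
    integrable_coord_mul2 i u (DS j g)
  have h3 : Integrable (fun x : E5 => (x i * u x) * g x) volume :=
    integrable_coord_mul2 i u g
  have key := integral_mul_fderiv_eq_neg_fderiv_mul_of_integrable (μ := volume)
    (f := fun y : E5 => y i * u y) (g := ⇑g) (v := V j)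
    h1 h2 h3 (fun x _ => hdf x) (fun x _ => g.differentiableAt)
  rw [show (∫ x : E5, (x i * u x) * DS j g x)
      = ∫ x : E5, (fun y : E5 => y i * u y) x * fderiv ℝ (⇑g) x (V j) from rfl, key]
  congr 1
  exact intg_congr fun x => by rw [hfd]

/-! ### key integral identities -/

lemma int_mul_lapS (f g : S) :
    ∫ x : E5, g x * lapS f x = - ∑ i : Fin 5, ∫ x : E5, DS i g x * DS i f x := by
  have h1 : ∫ x : E5, g x * lapS f x
      = ∫ x : E5, ∑ i : Fin 5, g x * DS i (DS i f) x :=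
    intg_congr fun x => by rw [lapS_apply, Finset.mul_sum]
  rw [h1, integral_finset_sum _ (fun i _ => integrable_mulS g (DS i (DS i f))),
    ← Finset.sum_neg_distrib]
  exact Finset.sum_congr rfl fun i _ => ibp g (DS i f) i

lemma sum_coord_pd_self (f : S) :
    ∑ i : Fin 5, ∫ x : E5, (x i * DS i f x) * f x
      = -(5/2) * ∫ x : E5, f x * f x := by
  have hpt : ∀ (i : Fin 5) (x : E5), (x i * DS i f x) * f x
      = (1/2) * (x i * DS i (mulS f f) x) := by
    intro i x; rw [DS_mulS]; ring
  have : ∀ i : Fin 5, ∫ x : E5, (x i * DS i f x) * f x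
      = -(1/2) * ∫ x : E5, f x * f x := by
    intro i
    rw [intg_congr (hpt i), integral_const_mul _ _, ibp_coord i (mulS f f)]
    rw [intg_congr (f := fun x => (mulS f f) x) (g := fun x => f x * f x) fun x => rfl]
    ring
  rw [Finset.sum_congr rfl fun i _ => this i]
  simp only [Finset.sum_const, Finset.card_univ, Fintype.card_fin, nsmul_eq_mul]
  ring


lemma sum_coord_pd_lap (f : S) :
    ∑ i : Fin 5, ∫ x : E5, (x i * DS i f x) * lapS f x
      = (3/2) * ∑ j : Fin 5, ∫ x : E5, DS j f x * DS j f x := by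
  have term : ∀ i j : Fin 5,
      ∫ x : E5, (x i * DS i f x) * DS j (DS j f) x
        = -(V j i * ∫ x : E5, DS i f x * DS j f x)
          + (1/2) * ∫ x : E5, DS j f x * DS j f x := by
    intro i j
    rw [ibp_coord_mul i j (DS i f) (DS j f)]
    have hsplit : ∫ x : E5, (V j i * DS i f x + x i * DS j (DS i f) x) * DS j f x
        = (V j i * ∫ x : E5, DS i f x * DS j f x)
          + ∫ x : E5, (x i * DS j (DS i f) x) * DS j f x := by
      have hA : Integrable (fun x : E5 => V j i * (DS i f x * DS j f x)) volume :=
        (integrable_mulS (DS i f) (DS j f)).const_mul _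
      have hB : Integrable (fun x : E5 => (x i * DS j (DS i f) x) * DS j f x) volume :=
        integrable_coord_mul2 i (DS j (DS i f)) (DS j f)
      rw [intg_congr (g := fun x : E5 => V j i * (DS i f x * DS j f x)
          + (x i * DS j (DS i f) x) * DS j f x) (fun x => by ring),
        integral_add hA hB, integral_const_mul _ _]
    rw [hsplit]
    have hsym : ∫ x : E5, (x i * DS j (DS i f) x) * DS j f x
        = -(1/2) * ∫ x : E5, DS j f x * DS j f x := by
      have hpt : ∀ x : E5, (x i * DS j (DS i f) x) * DS j f x
          = (1/2) * (x i * DS i (mulS (DS j f) (DS j f)) x) := by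
        intro x
        rw [DS_mulS, DS_symm f i j]
        ring
      rw [intg_congr hpt, integral_const_mul _ _, ibp_coord i (mulS (DS j f) (DS j f))]
      rw [intg_congr (f := fun x => (mulS (DS j f) (DS j f)) x)
        (g := fun x => DS j f x * DS j f x) fun x => rfl]
      ring
    rw [hsym]
    ring
  have expand : ∀ i : Fin 5, ∫ x : E5, (x i * DS i f x) * lapS f x
      = ∑ j : Fin 5, ∫ x : E5, (x i * DS i f x) * DS j (DS j f) x := by
    intro i
    rw [intg_congr (g := fun x : E5 => ∑ j : Fin 5, (x i * DS i f x) * DS j (DS j f) x)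
      (fun x => by rw [lapS_apply, Finset.mul_sum])]
    exact integral_finset_sum _ fun j _ => integrable_coord_mul2 i (DS i f) (DS j (DS j f))
  rw [Finset.sum_congr rfl fun i _ => expand i, Finset.sum_comm]
  have inner_sum : ∀ j : Fin 5,
      ∑ i : Fin 5, ∫ x : E5, (x i * DS i f x) * DS j (DS j f) x
        = (3/2) * ∫ x : E5, DS j f x * DS j f x := by
    intro j
    have hdelta : ∑ i : Fin 5, V j i * ∫ x : E5, DS i f x * DS j f x
        = ∫ x : E5, DS j f x * DS j f x := by
      have hterm : ∀ i : Fin 5, V j i * (∫ x : E5, DS i f x * DS j f x)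
          = if i = j then (∫ x : E5, DS i f x * DS j f x) else 0 := by
        intro i; rw [V_apply]
        split <;> simp
      rw [Finset.sum_congr rfl fun i _ => hterm i, Finset.sum_ite_eq' Finset.univ j]
      simp
    rw [Finset.sum_congr rfl fun i _ => term i j, Finset.sum_add_distrib,
      Finset.sum_neg_distrib, hdelta]
    simp only [Finset.sum_const, Finset.card_univ, Fintype.card_fin, nsmul_eq_mul]
    ring
  rw [Finset.sum_congr rfl fun j _ => inner_sum j, ← Finset.mul_sum]

lemma sum_coord_pd_rhs (f g : S) :
    ∑ i : Fin 5, ∫ x : E5,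
        ((x i * DS i f x) * (f x * g x) + (1/2) * ((x i * DS i g x) * (f x * f x)))
      = -(5/2) * ∫ x : E5, g x * (f x * f x) := by
  have hpt : ∀ (i : Fin 5) (x : E5),
      (x i * DS i f x) * (f x * g x) + (1/2) * ((x i * DS i g x) * (f x * f x))
        = (1/2) * (x i * DS i (mulS g (mulS f f)) x) := by
    intro i x
    rw [DS_mulS, DS_mulS]
    simp only [mulS_apply]
    ring
  have hterm : ∀ i : Fin 5, ∫ x : E5,
      ((x i * DS i f x) * (f x * g x) + (1/2) * ((x i * DS i g x) * (f x * f x)))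
        = -(1/2) * ∫ x : E5, g x * (f x * f x) := by
    intro i
    rw [intg_congr (hpt i), integral_const_mul _ _, ibp_coord i (mulS g (mulS f f))]
    rw [intg_congr (f := fun x => (mulS g (mulS f f)) x)
      (g := fun x => g x * (f x * f x)) fun x => rfl]
    ring
  rw [Finset.sum_congr rfl fun i _ => hterm i]
  simp only [Finset.sum_const, Finset.card_univ, Fintype.card_fin, nsmul_eq_mul]
  ring

end Pohozaev

open Pohozaev

/-- Pohozaev-type relations `M : H : R = 1 : 5 : 4` for ground states of the
quadratic Schrödinger system on `ℝ⁵`. -/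
theorem pohozaev_ratios (κ : ℝ) (hκ : 0 < κ) (φ ψ : SchwartzMap E5 ℝ)
    (hne : ¬ (∀ x : E5, φ x = 0 ∧ ψ x = 0))
    (heq1 : ∀ x : E5, φ x - lapR φ x = φ x * ψ x)
    (heq2 : ∀ x : E5, 2 * ψ x - κ * lapR ψ x = (φ x) ^ 2) :
    ((∫ x : E5, ∑ i : Fin 5, (pdR φ x i) ^ 2)
        + (κ / 2) * ∫ x : E5, ∑ i : Fin 5, (pdR ψ x i) ^ 2)
      = 5 * ∫ x : E5, ((φ x) ^ 2 + (ψ x) ^ 2) ∧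
    (∫ x : E5, ψ x * (φ x) ^ 2) = 4 * ∫ x : E5, ((φ x) ^ 2 + (ψ x) ^ 2) := by
  -- notation
  set a : ℝ := ∫ x : E5, φ x * φ x with ha
  set b : ℝ := ∫ x : E5, ψ x * ψ x with hb
  set P : ℝ := ∑ i : Fin 5, ∫ x : E5, DS i φ x * DS i φ x with hP
  set Q : ℝ := ∑ i : Fin 5, ∫ x : E5, DS i ψ x * DS i ψ x with hQ
  set R : ℝ := ∫ x : E5, ψ x * (φ x * φ x) with hR
  -- Equation (I): a + P = R
  have eqI : a + P = R := by
    have e1 : ∀ x : E5, φ x * φ x - φ x * lapS φ x = ψ x * (φ x * φ x) := by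
      intro x
      have h := heq1 x
      rw [lapR_eq] at h
      calc φ x * φ x - φ x * lapS φ x = φ x * (φ x - lapS φ x) := by ring
        _ = φ x * (φ x * ψ x) := by rw [h]
        _ = ψ x * (φ x * φ x) := by ring
    have hint1 : Integrable (fun x : E5 => φ x * φ x) volume := integrable_mulS φ φ
    have hint2 : Integrable (fun x : E5 => φ x * lapS φ x) volume := integrable_mulS φ (lapS φ)
    have i1 : (∫ x : E5, φ x * φ x) - (∫ x : E5, φ x * lapS φ x) = R := by
      rw [← integral_sub hint1 hint2]
      exact intg_congr e1
    rw [int_mul_lapS φ φ] at i1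
    rw [ha, hP, hR]
    linarith [i1]
  -- Equation (II): 2 b + κ Q = R
  have eqII : 2 * b + κ * Q = R := by
    have e2 : ∀ x : E5, 2 * (ψ x * ψ x) - κ * (ψ x * lapS ψ x) = ψ x * (φ x * φ x) := by
      intro x
      have h := heq2 x
      rw [lapR_eq] at h
      calc 2 * (ψ x * ψ x) - κ * (ψ x * lapS ψ x)
          = ψ x * (2 * ψ x - κ * lapS ψ x) := by ring
        _ = ψ x * (φ x ^ 2) := by rw [h]
        _ = ψ x * (φ x * φ x) := by ring
    have hint1 : Integrable (fun x : E5 => 2 * (ψ x * ψ x)) volume :=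
      (integrable_mulS ψ ψ).const_mul 2
    have hint2 : Integrable (fun x : E5 => κ * (ψ x * lapS ψ x)) volume :=
      (integrable_mulS ψ (lapS ψ)).const_mul κ
    have i2 : (∫ x : E5, 2 * (ψ x * ψ x)) - (∫ x : E5, κ * (ψ x * lapS ψ x)) = R := by
      rw [← integral_sub hint1 hint2]
      exact intg_congr e2
    rw [integral_const_mul _ _, integral_const_mul _ _, int_mul_lapS ψ ψ] at i2
    rw [hb, hQ, hR]
    linarith [i2]
  -- Pohozaev identity (III)
  have B1 : ∑ i : Fin 5, ∫ x : E5, (x i * DS i φ x) * (φ x * ψ x)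
      = -(5/2) * a - (3/2) * P := by
    have hper : ∀ i : Fin 5, ∫ x : E5, (x i * DS i φ x) * (φ x * ψ x)
        = (∫ x : E5, (x i * DS i φ x) * φ x)
          - ∫ x : E5, (x i * DS i φ x) * lapS φ x := by
      intro i
      have e3 : ∀ x : E5, (x i * DS i φ x) * φ x - (x i * DS i φ x) * lapS φ x
          = (x i * DS i φ x) * (φ x * ψ x) := by
        intro x
        have h := heq1 x
        rw [lapR_eq] at h
        calc (x i * DS i φ x) * φ x - (x i * DS i φ x) * lapS φ x
            = (x i * DS i φ x) * (φ x - lapS φ x) := by ring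
          _ = (x i * DS i φ x) * (φ x * ψ x) := by rw [h]
      rw [← integral_sub (integrable_coord_mul2 i (DS i φ) φ)
        (integrable_coord_mul2 i (DS i φ) (lapS φ))]
      exact (intg_congr e3).symm
    rw [Finset.sum_congr rfl fun i _ => hper i, Finset.sum_sub_distrib,
      sum_coord_pd_self φ, sum_coord_pd_lap φ]
  have B2 : ∑ i : Fin 5, ∫ x : E5, (x i * DS i ψ x) * (φ x * φ x)
      = -5 * b - (3/2) * (κ * Q) := by
    have hper : ∀ i : Fin 5, ∫ x : E5, (x i * DS i ψ x) * (φ x * φ x)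
        = 2 * (∫ x : E5, (x i * DS i ψ x) * ψ x)
          - κ * ∫ x : E5, (x i * DS i ψ x) * lapS ψ x := by
      intro i
      have e4 : ∀ x : E5, 2 * ((x i * DS i ψ x) * ψ x) - κ * ((x i * DS i ψ x) * lapS ψ x)
          = (x i * DS i ψ x) * (φ x * φ x) := by
        intro x
        have h := heq2 x
        rw [lapR_eq] at h
        calc 2 * ((x i * DS i ψ x) * ψ x) - κ * ((x i * DS i ψ x) * lapS ψ x)
            = (x i * DS i ψ x) * (2 * ψ x - κ * lapS ψ x) := by ring
          _ = (x i * DS i ψ x) * (φ x ^ 2) := by rw [h]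
          _ = (x i * DS i ψ x) * (φ x * φ x) := by ring
      have hint1 : Integrable (fun x : E5 => 2 * ((x i * DS i ψ x) * ψ x)) volume :=
        (integrable_coord_mul2 i (DS i ψ) ψ).const_mul 2
      have hint2 : Integrable (fun x : E5 => κ * ((x i * DS i ψ x) * lapS ψ x)) volume :=
        (integrable_coord_mul2 i (DS i ψ) (lapS ψ)).const_mul κ
      have := integral_sub hint1 hint2
      rw [integral_const_mul _ _, integral_const_mul _ _] at this
      rw [← this]
      exact (intg_congr e4).symm
    rw [Finset.sum_congr rfl fun i _ => hper i, Finset.sum_sub_distrib]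
    have h2 : ∑ i : Fin 5, 2 * (∫ x : E5, (x i * DS i ψ x) * ψ x)
        = 2 * ∑ i : Fin 5, ∫ x : E5, (x i * DS i ψ x) * ψ x := by
      rw [Finset.mul_sum]
    have h3 : ∑ i : Fin 5, κ * (∫ x : E5, (x i * DS i ψ x) * lapS ψ x)
        = κ * ∑ i : Fin 5, ∫ x : E5, (x i * DS i ψ x) * lapS ψ x := by
      rw [Finset.mul_sum]
    rw [h2, h3, sum_coord_pd_self ψ, sum_coord_pd_lap ψ]
    rw [hb, hQ]
    ring
  have eqIII : (-(5/2) * a - (3/2) * P) + (1/2) * (-5 * b - (3/2) * (κ * Q))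
      = -(5/2) * R := by
    have hsum : ∑ i : Fin 5, ∫ x : E5,
        ((x i * DS i φ x) * (φ x * ψ x) + (1/2) * ((x i * DS i ψ x) * (φ x * φ x)))
          = -(5/2) * R := by
      rw [hR]
      exact sum_coord_pd_rhs φ ψ
    have hsplit : ∀ i : Fin 5, ∫ x : E5,
        ((x i * DS i φ x) * (φ x * ψ x) + (1/2) * ((x i * DS i ψ x) * (φ x * φ x)))
          = (∫ x : E5, (x i * DS i φ x) * (φ x * ψ x))
            + (1/2) * ∫ x : E5, (x i * DS i ψ x) * (φ x * φ x) := by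
      intro i
      have hint1 : Integrable (fun x : E5 => (x i * DS i φ x) * (φ x * ψ x)) volume :=
        integrable_coord_mul2 i (DS i φ) (mulS φ ψ)
      have hint2 : Integrable
          (fun x : E5 => (1/2) * ((x i * DS i ψ x) * (φ x * φ x))) volume :=
        (integrable_coord_mul2 i (DS i ψ) (mulS φ φ)).const_mul _
      rw [integral_add hint1 hint2, integral_const_mul _ _]
    rw [Finset.sum_congr rfl fun i _ => hsplit i, Finset.sum_add_distrib] at hsum
    have h4 : ∑ i : Fin 5, (1/2) * (∫ x : E5, (x i * DS i ψ x) * (φ x * φ x))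
        = (1/2) * ∑ i : Fin 5, ∫ x : E5, (x i * DS i ψ x) * (φ x * φ x) := by
      rw [Finset.mul_sum]
    rw [h4, B1, B2] at hsum
    linarith [hsum]
  -- convert goals
  have goalP : (∫ x : E5, ∑ i : Fin 5, (pdR (⇑φ) x i) ^ 2) = P := by
    rw [intg_congr (g := fun x : E5 => ∑ i : Fin 5, DS i φ x * DS i φ x)
      (fun x => by
        refine Finset.sum_congr rfl fun i _ => ?_
        rw [pdR_eq, pow_two]),
      integral_finset_sum _ fun i _ => integrable_mulS (DS i φ) (DS i φ), hP]
  have goalQ : (∫ x : E5, ∑ i : Fin 5, (pdR (⇑ψ) x i) ^ 2) = Q := by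
    rw [intg_congr (g := fun x : E5 => ∑ i : Fin 5, DS i ψ x * DS i ψ x)
      (fun x => by
        refine Finset.sum_congr rfl fun i _ => ?_
        rw [pdR_eq, pow_two]),
      integral_finset_sum _ fun i _ => integrable_mulS (DS i ψ) (DS i ψ), hQ]
  have goalM : (∫ x : E5, ((φ x) ^ 2 + (ψ x) ^ 2)) = a + b := by
    rw [intg_congr (g := fun x : E5 => φ x * φ x + ψ x * ψ x)
      (fun x => by ring),
      integral_add (integrable_mulS φ φ) (integrable_mulS ψ ψ), ha, hb]
  have goalR : (∫ x : E5, ψ x * (φ x) ^ 2) = R := by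
    rw [intg_congr (g := fun x : E5 => ψ x * (φ x * φ x)) (fun x => by ring), hR]
  constructor
  · rw [goalP, goalQ, goalM]
    have hhalf : (κ / 2) * Q = (1/2) * (κ * Q) := by ring
    rw [hhalf]
    linarith [eqI, eqII, eqIII]
  · rw [goalR, goalM]
    linarith [eqI, eqII, eqIII]
end
end

section
/- Let κ > 0, ξ ∈ ℝ⁵, let u, v : ℝ⁵ → ℂ be Schwartz functions, and let w : ℝ⁵ → ℝ be a bounded continuous compactly supported function. Define u^ξ(x) = e^{iκ⟨x,ξ⟩}u(x), v^ξ(x) = e^{i⟨x,ξ⟩}v(x), and for a pair (a,b) set L(a,b)(x) = 2|∇a(x)|² + κ|∇b(x)|², N(a,b)(y) = 2κ|a(y)|² + |b(y)|², A(a,b)(x) = Im(2·conj(a(x))∇a(x) + conj(b(x))∇b(x)) ∈ ℝ⁵, and B(a,b)(y) = Im(2κ·conj(a(y))∇a(y) + κ·conj(b(y))∇b(y)) ∈ ℝ⁵. Then ∬_{ℝ⁵×ℝ⁵} [ L(u^ξ,v^ξ)(x)·N(u^ξ,v^ξ)(y) − A(u^ξ,v^ξ)(x)·B(u^ξ,v^ξ)(y)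 ] w(x)w(y) dx dy = ∬_{ℝ⁵×ℝ⁵} [ L(u,v)(x)·N(u,v)(y) − A(u,v)(x)·B(u,v)(y) ] w(x)w(y) dx dy; that is, the symmetrized Morawetz integrand is invariant under the Galilean transformation. -/
open MeasureTheory Complex ComplexConjugate

noncomputable section

/-- Spatial partial derivative of `f` at `x` in coordinate direction `i`. -/
def pd (f : E5 → ℂ) (x : E5) (i : Fin 5) : ℂ :=
  fderiv ℝ f x (EuclideanSpace.single i 1)

/-- Galilean phase factor `y ↦ e^{i c ⟨y,ξ⟩} f y`. -/
def gal (c : ℝ) (ξ : E5) (f : E5 → ℂ) : E5 → ℂ :=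
  fun y => Complex.exp (I * ((c * ∑ i : Fin 5, y i * ξ i : ℝ) : ℂ)) * f y

/-- Kinetic density `L(a,b)(x) = 2|∇a(x)|² + κ|∇b(x)|²`. -/
def Lden (κ : ℝ) (a b : E5 → ℂ) (x : E5) : ℝ :=
  2 * (∑ i : Fin 5, ‖pd a x i‖ ^ 2) + κ * (∑ i : Fin 5, ‖pd b x i‖ ^ 2)

/-- Mass density `N(a,b)(y) = 2κ|a(y)|² + |b(y)|²`. -/
def Nden (κ : ℝ) (a b : E5 → ℂ) (y : E5) : ℝ :=
  2 * κ * ‖a y‖ ^ 2 + ‖b y‖ ^ 2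

/-- Momentum density `A(a,b)(x) = Im(2 conj(a)∇a + conj(b)∇b)(x)`, componentwise. -/
def Aden (a b : E5 → ℂ) (x : E5) (i : Fin 5) : ℝ :=
  (2 * conj (a x) * pd a x i + conj (b x) * pd b x i).im

/-- Weighted momentum density `B(a,b)(y) = Im(2κ conj(a)∇a + κ conj(b)∇b)(y)`. -/
def Bden (κ : ℝ) (a b : E5 → ℂ) (y : E5) (i : Fin 5) : ℝ :=
  (2 * (κ : ℂ) * conj (a y) * pd a y i + (κ : ℂ) * conj (b y) * pd b y i).im

/- ### Auxiliary lemmas -/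

lemma norm_exp_I_real (r : ℝ) : ‖Complex.exp (Complex.I * (r : ℂ))‖ = 1 := by
  rw [Complex.norm_exp]; simp

lemma conj_exp_I_real (r : ℝ) :
    conj (Complex.exp (Complex.I * (r : ℂ))) * Complex.exp (Complex.I * (r : ℂ)) = 1 := by
  rw [Complex.conj_mul', norm_exp_I_real]; norm_num

lemma sqnorm (z : ℂ) : ‖z‖ ^ 2 = z.re ^ 2 + z.im ^ 2 := by
  rw [Complex.sq_norm, Complex.normSq_apply]; ring

lemma key_im (E a b : ℂ) (hE : conj E * E = 1) (t : ℝ) :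
    (conj (E * a) * (E * (b + Complex.I * t * a))).im = (conj a * b).im + t * ‖a‖ ^ 2 := by
  have h1 : conj (E * a) * (E * (b + Complex.I * t * a))
      = (conj E * E) * (conj a * b + Complex.I * t * (conj a * a)) := by
    rw [map_mul]; ring
  rw [h1, hE, one_mul]
  simp only [Complex.add_im, Complex.mul_im, Complex.mul_re, Complex.I_re, Complex.I_im,
    Complex.ofReal_re, Complex.ofReal_im, Complex.conj_re, Complex.conj_im, sqnorm]
  ring

lemma key_norm (E a b : ℂ) (hE : ‖E‖ = 1) (t : ℝ) :
    ‖E * (b + Complex.I * t * a)‖ ^ 2 = ‖b‖ ^ 2 + 2 * t * (conj a * b).im + t ^ 2 * ‖a‖ ^ 2 := by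
  rw [norm_mul, hE, one_mul]
  simp only [sqnorm, Complex.add_re, Complex.add_im, Complex.mul_re, Complex.mul_im,
    Complex.I_re, Complex.I_im, Complex.ofReal_re, Complex.ofReal_im,
    Complex.conj_re, Complex.conj_im]
  ring

lemma pd_gal (c : ℝ) (ξ : E5) (f : E5 → ℂ) (hf : Differentiable ℝ f) (x : E5) (i : Fin 5) :
    pd (gal c ξ f) x i =
      Complex.exp (I * ((c * ∑ j : Fin 5, x j * ξ j : ℝ) : ℂ)) *
        (pd f x i + I * ((c * ξ i : ℝ) : ℂ) * f x) := by
  set Lc : E5 →L[ℝ] ℂ := (c • (innerSL ℝ ξ)).smulRight I with hLc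
  have hval : ∀ y : E5, Lc y = I * ((c * ∑ j : Fin 5, y j * ξ j : ℝ) : ℂ) := by
    intro y; simp [hLc, real_smul, PiLp.inner_apply, mul_comm]
  have hgal : gal c ξ f = fun y => Complex.exp (Lc y) * f y := by
    funext y; rw [gal, hval]
  have hexp : HasFDerivAt (fun y => Complex.exp (Lc y)) (Complex.exp (Lc x) • Lc) x :=
    (Lc.hasFDerivAt).cexp
  have hmul := hexp.mul (hf x).hasFDerivAt
  have hfd : fderiv ℝ (gal c ξ f) x
      = Complex.exp (Lc x) • fderiv ℝ f x + f x • (Complex.exp (Lc x) • Lc) := by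
    rw [hgal]; exact hmul.fderiv
  have hsingle : Lc (EuclideanSpace.single i 1) = I * ((c * ξ i : ℝ) : ℂ) := by
    simp [hLc, real_smul, PiLp.inner_apply, EuclideanSpace.single_apply]
    ring
  rw [pd, hfd]
  simp only [ContinuousLinearMap.add_apply, ContinuousLinearMap.smul_apply, hsingle, hval x]
  rw [← pd]
  simp [smul_eq_mul]
  ring

lemma cont_pd {f : E5 → ℂ} (hf : ContDiff ℝ ((⊤ : ℕ∞) : WithTop ℕ∞) f) (i : Fin 5) :
    Continuous fun x => pd f x i :=
  (ContinuousLinearMap.apply ℝ ℂ (EuclideanSpace.single i 1)).continuous.comp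
    (hf.continuous_fderiv (by simp))

section densities
variable (κ : ℝ) (ξ : E5) (u v : E5 → ℂ)

lemma Nden_gal (x : E5) : Nden κ (gal κ ξ u) (gal 1 ξ v) x = Nden κ u v x := by
  rw [Nden, Nden]
  simp only [gal, norm_mul, norm_exp_I_real, one_mul]

lemma Aden_decomp (x : E5) (i : Fin 5) :
    Aden u v x i = 2 * (conj (u x) * pd u x i).im + (conj (v x) * pd v x i).im := by
  rw [Aden, Complex.add_im, mul_assoc]
  norm_num [Complex.mul_im]

lemma Bden_eq (x : E5) (i : Fin 5) : Bden κ u v x i = κ * Aden u v x i := by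
  rw [Bden, Aden, show 2 * (κ:ℂ) * conj (u x) * pd u x i + (κ:ℂ) * conj (v x) * pd v x i
      = (κ:ℂ) * (2 * conj (u x) * pd u x i + conj (v x) * pd v x i) from by ring]
  simp [Complex.mul_im]

variable (hu : Differentiable ℝ u) (hv : Differentiable ℝ v)
include hu hv

lemma Aden_gal (x : E5) (i : Fin 5) :
    Aden (gal κ ξ u) (gal 1 ξ v) x i = Aden u v x i + ξ i * Nden κ u v x := by
  have h2 : ∀ z : ℂ, (2 * z).im = 2 * z.im := fun z => by simp [Complex.mul_im]
  rw [Aden, Complex.add_im, mul_assoc, h2, pd_gal κ ξ u hu x i, pd_gal 1 ξ v hv x i]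
  rw [show gal κ ξ u x = Complex.exp (I * ((κ * ∑ j : Fin 5, x j * ξ j : ℝ) : ℂ)) * u x from rfl]
  rw [show gal 1 ξ v x = Complex.exp (I * ((1 * ∑ j : Fin 5, x j * ξ j : ℝ) : ℂ)) * v x from rfl]
  rw [key_im _ _ _ (conj_exp_I_real _) (κ * ξ i), key_im _ _ _ (conj_exp_I_real _) (1 * ξ i)]
  rw [Aden_decomp, Nden]
  ring

lemma Bden_gal (x : E5) (i : Fin 5) :
    Bden κ (gal κ ξ u) (gal 1 ξ v) x i = κ * Aden u v x i + κ * ξ i * Nden κ u v x := by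
  rw [Bden_eq, Aden_gal κ ξ u v hu hv]; ring

lemma Lden_gal (x : E5) :
    Lden κ (gal κ ξ u) (gal 1 ξ v) x
      = Lden κ u v x + 2 * κ * (∑ i : Fin 5, ξ i * Aden u v x i)
        + κ * (∑ i : Fin 5, (ξ i) ^ 2) * Nden κ u v x := by
  have hp : ∀ i, ‖pd (gal κ ξ u) x i‖ ^ 2
      = ‖pd u x i‖ ^ 2 + 2 * (κ * ξ i) * (conj (u x) * pd u x i).im
        + (κ * ξ i) ^ 2 * ‖u x‖ ^ 2 := fun i => by
    rw [pd_gal κ ξ u hu x i, key_norm _ _ _ (norm_exp_I_real _) (κ * ξ i)]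
  have hq : ∀ i, ‖pd (gal 1 ξ v) x i‖ ^ 2
      = ‖pd v x i‖ ^ 2 + 2 * (1 * ξ i) * (conj (v x) * pd v x i).im
        + (1 * ξ i) ^ 2 * ‖v x‖ ^ 2 := fun i => by
    rw [pd_gal 1 ξ v hv x i, key_norm _ _ _ (norm_exp_I_real _) (1 * ξ i)]
  rw [Lden, Lden, Nden,
    Finset.sum_congr rfl fun i _ => hp i, Finset.sum_congr rfl fun i _ => hq i,
    Finset.sum_congr rfl fun i _ => congrArg (ξ i * ·) (Aden_decomp u v x i)]
  simp only [Finset.mul_sum, Finset.sum_mul, ← Finset.sum_add_distrib]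
  exact Finset.sum_congr rfl fun i _ => by ring

end densities

/-- Closed form of the symmetrized double integral. -/
lemma double_closed (w : E5 → ℝ) (hw : Continuous w) (hwc : HasCompactSupport w)
    (L N : E5 → ℝ) (A B : E5 → Fin 5 → ℝ)
    (hL : Continuous L) (hN : Continuous N)
    (hA : ∀ i, Continuous fun x => A x i) (hB : ∀ i, Continuous fun x => B x i) :
    ∫ x : E5, ∫ y : E5, (L x * N y - ∑ i : Fin 5, A x i * B y i) * w x * w y
      = (∫ x : E5, L x * w x) * (∫ y : E5, N y * w y)
        - ∑ i : Fin 5, (∫ x : E5, A x i * w x) * (∫ y : E5, B y i * w y) := by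
  have integ : ∀ {f : E5 → ℝ}, Continuous f → Integrable (fun x => f x * w x) :=
    fun {f} hf => (hf.mul hw).integrable_of_hasCompactSupport hwc.mul_left
  have hinner : ∀ x, (∫ y : E5, (L x * N y - ∑ i : Fin 5, A x i * B y i) * w x * w y)
      = w x * (L x * ∫ y : E5, N y * w y)
        - ∑ i : Fin 5, w x * (A x i * ∫ y : E5, B y i * w y) := by
    intro x
    have hptw : ∀ y, (L x * N y - ∑ i : Fin 5, A x i * B y i) * w x * w y
        = w x * (L x * (N y * w y)) - ∑ i : Fin 5, w x * (A x i * (B y i * w y)) := by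
      intro y
      have hs : (∑ i : Fin 5, A x i * B y i) * w x * w y
          = ∑ i : Fin 5, w x * (A x i * (B y i * w y)) := by
        rw [Finset.sum_mul, Finset.sum_mul]
        exact Finset.sum_congr rfl fun i _ => by ring
      rw [sub_mul, sub_mul, hs]; ring
    simp only [hptw]
    rw [integral_sub (((integ hN).const_mul (L x)).const_mul (w x))
      (integrable_finset_sum _ fun i _ => ((integ (hB i)).const_mul (A x i)).const_mul (w x)),
      integral_finset_sum _ fun i _ => ((integ (hB i)).const_mul (A x i)).const_mul (w x)]
    rw [integral_const_mul, integral_const_mul]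
    congr 1
    exact Finset.sum_congr rfl fun i _ => by rw [integral_const_mul, integral_const_mul]
  simp only [hinner]
  have hptw2 : ∀ x, w x * (L x * ∫ y : E5, N y * w y)
        - ∑ i : Fin 5, w x * (A x i * ∫ y : E5, B y i * w y)
      = (∫ y : E5, N y * w y) * (L x * w x)
        - ∑ i : Fin 5, (∫ y : E5, B y i * w y) * (A x i * w x) := by
    intro x
    congr 1
    · ring
    · exact Finset.sum_congr rfl fun i _ => by ring
  simp only [hptw2]
  rw [integral_sub ((integ hL).const_mul _)
      (integrable_finset_sum _ fun i _ => (integ (hA i)).const_mul _),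
    integral_finset_sum _ fun i _ => (integ (hA i)).const_mul _, integral_const_mul]
  congr 1
  · ring
  · exact Finset.sum_congr rfl fun i _ => by rw [integral_const_mul]; ring

/-- Galilean invariance of the symmetrized interaction Morawetz integrand. -/
theorem galilean_invariance_morawetz (κ : ℝ) (hκ : 0 < κ) (ξ : E5)
    (u v : SchwartzMap E5 ℂ) (w : E5 → ℝ) (hw : Continuous w)
    (hwb : ∃ C : ℝ, ∀ x, |w x| ≤ C) (hwc : HasCompactSupport w) :
    (∫ x : E5, ∫ y : E5,
        (Lden κ (gal κ ξ u) (gal 1 ξ v) x * Nden κ (gal κ ξ u) (gal 1 ξ v) y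
          - ∑ i : Fin 5, Aden (gal κ ξ u) (gal 1 ξ v) x i
              * Bden κ (gal κ ξ u) (gal 1 ξ v) y i) * w x * w y)
      = ∫ x : E5, ∫ y : E5,
        (Lden κ u v x * Nden κ u v y
          - ∑ i : Fin 5, Aden u v x i * Bden κ u v y i) * w x * w y := by
  have hu : Differentiable ℝ (u : E5 → ℂ) := (u.smooth ⊤).differentiable (by simp)
  have hv : Differentiable ℝ (v : E5 → ℂ) := (v.smooth ⊤).differentiable (by simp)
  have hpu : ∀ i, Continuous fun x => pd u x i := fun i => cont_pd (u.smooth ⊤) i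
  have hpv : ∀ i, Continuous fun x => pd v x i := fun i => cont_pd (v.smooth ⊤) i
  have hcu : Continuous fun x : E5 => conj ((u : E5 → ℂ) x) :=
    Complex.continuous_conj.comp u.continuous
  have hcv : Continuous fun x : E5 => conj ((v : E5 → ℂ) x) :=
    Complex.continuous_conj.comp v.continuous
  have hL : Continuous (Lden κ u v) := by
    refine (continuous_const.mul ?_).add (continuous_const.mul ?_)
    · exact continuous_finset_sum _ fun i _ => ((hpu i).norm.pow 2)
    · exact continuous_finset_sum _ fun i _ => ((hpv i).norm.pow 2)
  have hN : Continuous (Nden κ u v) :=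
    (continuous_const.mul (u.continuous.norm.pow 2)).add (v.continuous.norm.pow 2)
  have hA : ∀ i, Continuous fun x => Aden u v x i := fun i =>
    Complex.continuous_im.comp
      (((continuous_const.mul hcu).mul (hpu i)).add (hcv.mul (hpv i)))
  -- the primed densities
  set q : ℝ := ∑ i : Fin 5, (ξ i) ^ 2 with hqdef
  have hL' : Continuous fun x => Lden κ u v x + 2 * κ * (∑ i : Fin 5, ξ i * Aden u v x i)
      + κ * q * Nden κ u v x := by
    refine (hL.add (continuous_const.mul ?_)).add (continuous_const.mul hN)
    exact continuous_finset_sum _ fun i _ => continuous_const.mul (hA i)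
  have hA' : ∀ i, Continuous fun x => Aden u v x i + ξ i * Nden κ u v x := fun i =>
    (hA i).add (continuous_const.mul hN)
  have hB' : ∀ i, Continuous fun x => κ * Aden u v x i + κ * ξ i * Nden κ u v x := fun i =>
    (continuous_const.mul (hA i)).add (continuous_const.mul hN)
  have integ : ∀ {f : E5 → ℝ}, Continuous f → Integrable (fun x => f x * w x) :=
    fun {f} hf => (hf.mul hw).integrable_of_hasCompactSupport hwc.mul_left
  -- rewrite the LHS integrand using the pointwise density lemmas
  have step1 : (∫ x : E5, ∫ y : E5,
        (Lden κ (gal κ ξ u) (gal 1 ξ v) x * Nden κ (gal κ ξ u) (gal 1 ξ v) y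
          - ∑ i : Fin 5, Aden (gal κ ξ u) (gal 1 ξ v) x i
              * Bden κ (gal κ ξ u) (gal 1 ξ v) y i) * w x * w y)
      = ∫ x : E5, ∫ y : E5,
        ((Lden κ u v x + 2 * κ * (∑ i : Fin 5, ξ i * Aden u v x i)
            + κ * q * Nden κ u v x) * Nden κ u v y
          - ∑ i : Fin 5, (Aden u v x i + ξ i * Nden κ u v x)
              * (κ * Aden u v y i + κ * ξ i * Nden κ u v y)) * w x * w y := by
    simp only [Lden_gal κ ξ u v hu hv, Nden_gal, Aden_gal κ ξ u v hu hv,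
      Bden_gal κ ξ u v hu hv, hqdef]
  have step2 : (∫ x : E5, ∫ y : E5,
        (Lden κ u v x * Nden κ u v y
          - ∑ i : Fin 5, Aden u v x i * Bden κ u v y i) * w x * w y)
      = ∫ x : E5, ∫ y : E5,
        (Lden κ u v x * Nden κ u v y
          - ∑ i : Fin 5, Aden u v x i * (κ * Aden u v y i)) * w x * w y := by
    simp only [Bden_eq]
  rw [step1, step2,
    double_closed w hw hwc _ _ _ _ hL' hN hA' hB',
    double_closed w hw hwc _ _ _ (fun y i => κ * Aden u v y i) hL hN hA (fun i => continuous_const.mul (hA i))]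
  -- abbreviations for the one-dimensional integrals
  have hSint : Integrable (fun x => ∑ i : Fin 5, ξ i * (Aden (u : E5 → ℂ) v x i * w x)) :=
    integrable_finset_sum _ fun i _ => (integ (hA i)).const_mul (ξ i)
  have hsum_int : (∫ x : E5, ∑ i : Fin 5, ξ i * (Aden (u : E5 → ℂ) v x i * w x))
      = ∑ i : Fin 5, ξ i * ∫ x : E5, Aden (u : E5 → ℂ) v x i * w x := by
    rw [integral_finset_sum _ fun i _ => (integ (hA i)).const_mul (ξ i)]
    exact Finset.sum_congr rfl fun i _ => integral_const_mul _ _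
  have hLint : (∫ x : E5, (Lden κ u v x + 2 * κ * (∑ i : Fin 5, ξ i * Aden (u : E5 → ℂ) v x i)
        + κ * q * Nden κ u v x) * w x)
      = (∫ x : E5, Lden κ u v x * w x)
        + 2 * κ * (∑ i : Fin 5, ξ i * ∫ x : E5, Aden (u : E5 → ℂ) v x i * w x)
        + κ * q * ∫ x : E5, Nden κ u v x * w x := by
    have hptw : ∀ x, (Lden κ u v x + 2 * κ * (∑ i : Fin 5, ξ i * Aden (u : E5 → ℂ) v x i)
          + κ * q * Nden κ u v x) * w x
        = Lden κ u v x * w x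
          + 2 * κ * (∑ i : Fin 5, ξ i * (Aden (u : E5 → ℂ) v x i * w x))
          + κ * q * (Nden κ u v x * w x) := by
      intro x
      have hs : (∑ i : Fin 5, ξ i * Aden (u : E5 → ℂ) v x i) * w x
          = ∑ i : Fin 5, ξ i * (Aden (u : E5 → ℂ) v x i * w x) := by
        rw [Finset.sum_mul]; exact Finset.sum_congr rfl fun i _ => by ring
      calc (Lden κ u v x + 2 * κ * (∑ i : Fin 5, ξ i * Aden (u : E5 → ℂ) v x i)
            + κ * q * Nden κ u v x) * w x
          = Lden κ u v x * w x
            + 2 * κ * ((∑ i : Fin 5, ξ i * Aden (u : E5 → ℂ) v x i) * w x)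
            + κ * q * (Nden κ u v x * w x) := by ring
        _ = _ := by rw [hs]
    simp only [hptw]
    have h12 : Integrable (fun x => Lden κ u v x * w x
        + 2 * κ * ∑ i : Fin 5, ξ i * (Aden (u : E5 → ℂ) v x i * w x)) :=
      (integ hL).add (hSint.const_mul (2 * κ))
    rw [integral_add h12 ((integ hN).const_mul (κ * q)),
      integral_add (integ hL) (hSint.const_mul (2 * κ)),
      integral_const_mul, integral_const_mul, hsum_int]
  have hA'int : ∀ i : Fin 5,
      (∫ x : E5, (Aden (u : E5 → ℂ) v x i + ξ i * Nden κ u v x) * w x)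
        = (∫ x : E5, Aden (u : E5 → ℂ) v x i * w x)
          + ξ i * ∫ x : E5, Nden κ u v x * w x := by
    intro i
    have hp : ∀ x, (Aden (u : E5 → ℂ) v x i + ξ i * Nden κ u v x) * w x
        = Aden (u : E5 → ℂ) v x i * w x + ξ i * (Nden κ u v x * w x) := fun x => by ring
    simp only [hp]
    rw [integral_add (integ (hA i)) ((integ hN).const_mul (ξ i)), integral_const_mul]
  have hB'int : ∀ i : Fin 5,
      (∫ y : E5, (κ * Aden (u : E5 → ℂ) v y i + κ * ξ i * Nden κ u v y) * w y)
        = κ * (∫ y : E5, Aden (u : E5 → ℂ) v y i * w y)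
          + κ * ξ i * ∫ y : E5, Nden κ u v y * w y := by
    intro i
    have hp : ∀ y, (κ * Aden (u : E5 → ℂ) v y i + κ * ξ i * Nden κ u v y) * w y
        = κ * (Aden (u : E5 → ℂ) v y i * w y) + κ * ξ i * (Nden κ u v y * w y) := fun y => by ring
    simp only [hp]
    rw [integral_add ((integ (hA i)).const_mul κ) ((integ hN).const_mul (κ * ξ i)),
      integral_const_mul, integral_const_mul]
  have hBint : ∀ i : Fin 5,
      (∫ y : E5, κ * Aden (u : E5 → ℂ) v y i * w y)
        = κ * ∫ y : E5, Aden (u : E5 → ℂ) v y i * w y := by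
    intro i
    simp only [mul_assoc]
    exact integral_const_mul _ _
  rw [hLint]
  simp only [hA'int, hB'int, hBint]
  -- final algebra
  set l := ∫ x : E5, Lden κ u v x * w x
  set n := ∫ x : E5, Nden κ u v x * w x
  set a : Fin 5 → ℝ := fun i => ∫ x : E5, Aden (u : E5 → ℂ) v x i * w x with ha
  have hexp : ∑ i : Fin 5, (a i + ξ i * n) * (κ * a i + κ * ξ i * n)
      = (∑ i : Fin 5, a i * (κ * a i)) + 2 * κ * n * (∑ i : Fin 5, ξ i * a i)
        + κ * n ^ 2 * q := by
    rw [hqdef, Finset.mul_sum, Finset.mul_sum, ← Finset.sum_add_distrib, ← Finset.sum_add_distrib]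
    exact Finset.sum_congr rfl fun i _ => by ring
  rw [hexp]
  ring
end
end

section
/- Let κ > 0, let u, v ∈ ℂ, and let p, q ∈ ℂ⁵. Then Im(2·conj(u)·p + conj(v)·q) · Im(2κ·conj(u)·p + κ·conj(v)·q) ≤ (2‖p‖² + κ‖q‖²) · (2κ|u|² + |v|²), where the left-hand side is the Euclidean dot product of the two ℝ⁵-vectors of componentwise imaginary parts. -/
open Complex ComplexConjugate

/-- Nonnegativity of the angular terms in the interaction Morawetz identity:
the product of the two momentum densities is controlled by the kinetic and
mass densities. -/
theorem momentum_densities_dot_le (κ : ℝ) (hκ : 0 < κ) (u v : ℂ)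
    (p q : Fin 5 → ℂ) :
    (∑ i : Fin 5, (2 * conj u * p i + conj v * q i).im
        * (2 * (κ : ℂ) * conj u * p i + (κ : ℂ) * conj v * q i).im)
      ≤ (2 * (∑ i : Fin 5, ‖p i‖ ^ 2) + κ * (∑ i : Fin 5, ‖q i‖ ^ 2))
        * (2 * κ * ‖u‖ ^ 2 + ‖v‖ ^ 2) := by
  have key : ∀ i : Fin 5,
      (2 * conj u * p i + conj v * q i).im
        * (2 * (κ : ℂ) * conj u * p i + (κ : ℂ) * conj v * q i).im
      ≤ (2 * ‖p i‖ ^ 2 + κ * ‖q i‖ ^ 2) * (2 * κ * ‖u‖ ^ 2 + ‖v‖ ^ 2) := by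
    intro i
    set A : ℂ := 2 * conj u * p i + conj v * q i with hA
    have h2 : (2 * (κ : ℂ) * conj u * p i + (κ : ℂ) * conj v * q i) = (κ : ℂ) * A := by
      ring
    rw [h2]
    have him : ((κ : ℂ) * A).im = κ * A.im := by
      simp [Complex.mul_im]
    rw [him]
    have h1 : A.im ^ 2 ≤ ‖A‖ ^ 2 := by
      have h := Complex.abs_im_le_norm A
      calc A.im ^ 2 = |A.im| ^ 2 := (_root_.sq_abs _).symm
        _ ≤ ‖A‖ ^ 2 := pow_le_pow_left₀ (abs_nonneg _) h 2
    have h3 : ‖A‖ ≤ 2 * ‖u‖ * ‖p i‖ + ‖v‖ * ‖q i‖ := by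
      calc ‖A‖ ≤ ‖2 * conj u * p i‖ + ‖conj v * q i‖ :=
            norm_add_le _ _
        _ = 2 * ‖u‖ * ‖p i‖ + ‖v‖ * ‖q i‖ := by
            simp [map_mul, Complex.norm_conj]
    have habs : (0:ℝ) ≤ ‖A‖ := norm_nonneg A
    have hnn : (0:ℝ) ≤ 2 * ‖u‖ * ‖p i‖ + ‖v‖ * ‖q i‖ := by positivity
    have h4 : ‖A‖ ^ 2 ≤ (2 * ‖u‖ * ‖p i‖ + ‖v‖ * ‖q i‖) ^ 2 := by
      nlinarith
    have hsq : (‖v‖ * ‖p i‖ - κ * ‖u‖ * ‖q i‖) ^ 2 ≥ 0 := sq_nonneg _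
    nlinarith [sq_nonneg A.im, norm_nonneg u, norm_nonneg v, norm_nonneg (p i),
      norm_nonneg (q i), mul_pos hκ hκ]
  calc (∑ i : Fin 5, (2 * conj u * p i + conj v * q i).im
        * (2 * (κ : ℂ) * conj u * p i + (κ : ℂ) * conj v * q i).im)
      ≤ ∑ i : Fin 5, (2 * ‖p i‖ ^ 2 + κ * ‖q i‖ ^ 2) * (2 * κ * ‖u‖ ^ 2 + ‖v‖ ^ 2) :=
        Finset.sum_le_sum fun i _ => key i
    _ = (2 * (∑ i : Fin 5, ‖p i‖ ^ 2) + κ * (∑ i : Fin 5, ‖q i‖ ^ 2))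
        * (2 * κ * ‖u‖ ^ 2 + ‖v‖ ^ 2) := by
        rw [← Finset.sum_mul, Finset.mul_sum, Finset.mul_sum, ← Finset.sum_add_distrib]
end

section
/- Let φ₀ : [0,∞) → ℝ be smooth, define ψ₀(r) = (1/r)∫₀^r φ₀(s) ds for r > 0, and define a : ℝ⁵ → ℝ by a(x) = ∫₀^{|x|} ψ₀(r)·r dr. Then for every x ∈ ℝ⁵ with x ≠ 0, a is twice differentiable at x with second partial derivatives ∂_j∂_k a(x) = δ_{jk}·φ₀(|x|) + (δ_{jk} − x_j x_k/|x|²)·(ψ₀(|x|) − φ₀(|x|)) for 1 ≤ j,k ≤ 5, and consequently Δa(x) = 4ψ₀(|x|) + φ₀(|x|). -/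
open MeasureTheory

noncomputable section

lemma hasFDerivAt_norm_E5 {y : E5} (hy : y ≠ 0) :
    HasFDerivAt (fun z : E5 => ‖z‖) (‖y‖⁻¹ • (innerSL ℝ y)) y := by
  have hinner := (hasFDerivAt_id (𝕜 := ℝ) y).inner ℝ (hasFDerivAt_id y)
  have h0 : (inner ℝ y y : ℝ) ≠ 0 := by
    rw [real_inner_self_eq_norm_sq]
    exact pow_ne_zero 2 (norm_ne_zero_iff.mpr hy)
  have h := hinner.sqrt h0
  have heq : (fun z : E5 => Real.sqrt (inner ℝ z z : ℝ)) = fun z : E5 => ‖z‖ := by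
    funext z; rw [real_inner_self_eq_norm_sq, Real.sqrt_sq (norm_nonneg z)]
  simp only [id] at h
  rw [heq] at h
  refine h.congr_fderiv ?_
  ext v
  simp only [ContinuousLinearMap.smul_apply, innerSL_apply_apply, ContinuousLinearMap.coe_comp',
    Function.comp_apply, ContinuousLinearMap.prod_apply, ContinuousLinearMap.coe_id', id_eq,
    fderivInnerCLM_apply, real_inner_self_eq_norm_sq, Real.sqrt_sq (norm_nonneg y),
    smul_eq_mul]
  rw [real_inner_comm v y]
  have : ‖y‖ ≠ 0 := norm_ne_zero_iff.mpr hy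
  field_simp
  ring

/-- Hessian of the radial Morawetz weight `a(x) = ∫₀^{|x|} ψ₀(r) r dr`,
where `ψ₀(r) = (1/r)∫₀^r φ₀(s) ds`. -/
theorem radial_weight_hessian (φ₀ : ℝ → ℝ)
    (hφ : ContDiffOn ℝ (⊤ : ℕ∞) φ₀ (Set.Ici 0))
    (ψ₀ : ℝ → ℝ) (hψ : ∀ r : ℝ, 0 < r → ψ₀ r = (1 / r) * ∫ s in (0 : ℝ)..r, φ₀ s)
    (a : E5 → ℝ) (ha : ∀ x : E5, a x = ∫ r in (0 : ℝ)..‖x‖, ψ₀ r * r)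
    (x : E5) (hx : x ≠ 0) :
    DifferentiableAt ℝ a x ∧
    (∀ k : Fin 5, DifferentiableAt ℝ
      (fun y => fderiv ℝ a y (EuclideanSpace.single k 1)) x) ∧
    (∀ j k : Fin 5,
      fderiv ℝ (fun y => fderiv ℝ a y (EuclideanSpace.single k 1)) x
          (EuclideanSpace.single j 1)
        = (if j = k then (1 : ℝ) else 0) * φ₀ ‖x‖
          + ((if j = k then (1 : ℝ) else 0) - x j * x k / ‖x‖ ^ 2)
            * (ψ₀ ‖x‖ - φ₀ ‖x‖)) ∧
    (∑ j : Fin 5,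
        fderiv ℝ (fun y => fderiv ℝ a y (EuclideanSpace.single j 1)) x
          (EuclideanSpace.single j 1)
      = 4 * ψ₀ ‖x‖ + φ₀ ‖x‖) := by
  have hr0 : (0:ℝ) < ‖x‖ := norm_pos_iff.mpr hx
  have hrne : ‖x‖ ≠ 0 := hr0.ne'
  -- continuous extension of φ₀
  set φ₁ : ℝ → ℝ := fun t => φ₀ (max t 0) with hφ₁def
  have hcφ₀ : ContinuousOn φ₀ (Set.Ici 0) := hφ.continuousOn
  have hφ₁cont : Continuous φ₁ := by
    have hmax : Continuous (fun t : ℝ => max t 0) := by continuity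
    apply hcφ₀.comp_continuous hmax
    intro t; exact Set.mem_Ici.mpr (le_max_right t 0)
  have hφ₁eq : ∀ t : ℝ, 0 ≤ t → φ₁ t = φ₀ t := fun t ht => by
    simp only [hφ₁def]; rw [max_eq_left ht]
  set F : ℝ → ℝ := fun t => ∫ s in (0:ℝ)..t, φ₁ s with hFdef
  have hFderiv : ∀ t : ℝ, HasDerivAt F (φ₁ t) t := fun t =>
    intervalIntegral.integral_hasDerivAt_right (hφ₁cont.intervalIntegrable 0 t)
      (hφ₁cont.aestronglyMeasurable.stronglyMeasurableAtFilter) hφ₁cont.continuousAt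
  have hFcont : Continuous F :=
    continuous_iff_continuousAt.mpr fun t => (hFderiv t).continuousAt
  have hψF : ∀ t : ℝ, 0 < t → ψ₀ t = t⁻¹ * F t := by
    intro t ht
    rw [hψ t ht, one_div]
    congr 1
    apply intervalIntegral.integral_congr
    intro s hs
    rw [Set.uIcc_of_le ht.le] at hs
    exact (hφ₁eq s hs.1).symm
  set G : ℝ → ℝ := fun t => ∫ s in (0:ℝ)..t, F s with hGdef
  have hGderiv : ∀ t : ℝ, HasDerivAt G (F t) t := fun t =>
    intervalIntegral.integral_hasDerivAt_right (hFcont.intervalIntegrable 0 t)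
      (hFcont.aestronglyMeasurable.stronglyMeasurableAtFilter) hFcont.continuousAt
  have haG : a = fun y : E5 => G ‖y‖ := by
    funext y
    rw [ha]
    apply intervalIntegral.integral_congr
    intro s hs
    rw [Set.uIcc_of_le (norm_nonneg y)] at hs
    show ψ₀ s * s = F s
    rcases eq_or_lt_of_le hs.1 with h | h
    · rw [← h]
      simp [hFdef]
    · rw [hψF s h]
      field_simp
  -- first derivative
  have hda : ∀ y : E5, y ≠ 0 → HasFDerivAt a ((F ‖y‖ * ‖y‖⁻¹) • (innerSL ℝ y)) y := by
    intro y hy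
    rw [haG]
    have h := (hGderiv ‖y‖).comp_hasFDerivAt y (hasFDerivAt_norm_E5 hy)
    rw [smul_smul] at h
    exact h
  have hev : ∀ k : Fin 5, (fun y => fderiv ℝ a y (EuclideanSpace.single k 1))
      =ᶠ[nhds x] fun y : E5 => (F ‖y‖ * ‖y‖⁻¹) * y k := by
    intro k
    filter_upwards [IsOpen.mem_nhds isOpen_compl_singleton hx] with y hy
    have hy0 : y ≠ 0 := hy
    rw [(hda y hy0).fderiv]
    simp [EuclideanSpace.inner_single_right, real_inner_comm]
  -- second derivative
  have hu : HasDerivAt (fun t : ℝ => F t * t⁻¹)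
      (φ₁ ‖x‖ * ‖x‖⁻¹ + F ‖x‖ * (-(‖x‖^2)⁻¹)) ‖x‖ :=
    (hFderiv ‖x‖).mul (hasDerivAt_inv hrne)
  have hcomp : HasFDerivAt (fun y : E5 => F ‖y‖ * ‖y‖⁻¹)
      ((φ₁ ‖x‖ * ‖x‖⁻¹ + F ‖x‖ * (-(‖x‖^2)⁻¹)) • (‖x‖⁻¹ • (innerSL ℝ x))) x :=
    hu.comp_hasFDerivAt x (hasFDerivAt_norm_E5 hx)
  have hg : ∀ k : Fin 5, HasFDerivAt (fun y : E5 => (F ‖y‖ * ‖y‖⁻¹) * y k)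
      ((F ‖x‖ * ‖x‖⁻¹) • (EuclideanSpace.proj k : E5 →L[ℝ] ℝ)
        + (x k) • ((φ₁ ‖x‖ * ‖x‖⁻¹ + F ‖x‖ * (-(‖x‖^2)⁻¹)) • (‖x‖⁻¹ • (innerSL ℝ x)))) x := by
    intro k
    exact hcomp.mul ((EuclideanSpace.proj k : E5 →L[ℝ] ℝ).hasFDerivAt)
  have hdiff2 : ∀ k : Fin 5, DifferentiableAt ℝ
      (fun y => fderiv ℝ a y (EuclideanSpace.single k 1)) x := fun k =>
    (hev k).differentiableAt_iff.mpr (hg k).differentiableAt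
  have key : ∀ j k : Fin 5,
      fderiv ℝ (fun y => fderiv ℝ a y (EuclideanSpace.single k 1)) x
          (EuclideanSpace.single j 1)
        = (if j = k then (1 : ℝ) else 0) * φ₀ ‖x‖
          + ((if j = k then (1 : ℝ) else 0) - x j * x k / ‖x‖ ^ 2)
            * (ψ₀ ‖x‖ - φ₀ ‖x‖) := by
    intro j k
    rw [(hev k).fderiv_eq, (hg k).fderiv]
    have h1 : (EuclideanSpace.proj k : E5 →L[ℝ] ℝ) (EuclideanSpace.single j 1)
        = if j = k then (1:ℝ) else 0 := by
      simp [EuclideanSpace.single_apply, eq_comm]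
    have h2 : (innerSL ℝ x) (EuclideanSpace.single j 1) = x j := by
      simp [EuclideanSpace.inner_single_right, real_inner_comm]
    simp only [ContinuousLinearMap.add_apply, ContinuousLinearMap.smul_apply, h1, h2,
      smul_eq_mul]
    rw [hψF ‖x‖ hr0, hφ₁eq ‖x‖ hr0.le]
    by_cases hjk : j = k <;> simp only [hjk, if_pos, if_neg, ite_true, ite_false] <;>
      field_simp <;> ring
  refine ⟨(hda x hx).differentiableAt, hdiff2, key, ?_⟩
  have hsum : ∑ j : Fin 5, x j * x j = ‖x‖ ^ 2 := by
    have h := EuclideanSpace.norm_eq x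
    rw [h, Real.sq_sqrt (by positivity)]
    congr 1; funext j; rw [Real.norm_eq_abs, sq_abs, sq]
  have hterm : ∀ j : Fin 5,
      (if j = j then (1:ℝ) else 0) * φ₀ ‖x‖
        + ((if j = j then (1:ℝ) else 0) - x j * x j / ‖x‖ ^ 2) * (ψ₀ ‖x‖ - φ₀ ‖x‖)
      = ψ₀ ‖x‖ + x j * x j * ((φ₀ ‖x‖ - ψ₀ ‖x‖) / ‖x‖ ^ 2) := by
    intro j
    rw [if_pos rfl]
    field_simp
    ring
  rw [Finset.sum_congr rfl (fun j _ => (key j j).trans (hterm j)),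
    Finset.sum_add_distrib, Finset.sum_const, ← Finset.sum_mul, hsum]
  simp only [Finset.card_univ, Fintype.card_fin, nsmul_eq_mul]
  field_simp
  ring
end
end
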